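/- If two types τ and σ of the language {→,+,×} are isomorphic (witnessed by a pair of closed lambda terms whose compositions are =βη-equal to the identity), then for every valuation v assigning a positive natural number to every atomic type, the arithmetic interpretations of τ and σ under v are equal, where τ+σ is interpreted as sum, τ×σ as product, and τ→σ as the exponential ⟦σ⟧^⟦τ⟧. -/

import Mathlib

namespace ExpLog

-- Types generated by atoms, arrows, products and sums.
inductive Ty : Type
  | atom : ℕ → Ty
  | arr  : Ty → Ty → Ty
  | prod : Ty → Ty → Ty
  | sum  : Ty → Ty → Ty
  deriving Repr, DecidableEq
abbrev Ctx := List Ty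

-- Typed de Bruijn indices.
inductive Var : Ctx → Ty → Type
  | vz {Γ A} : Var (A :: Γ) A
  | vs {Γ A B} : Var Γ A → Var (B :: Γ) A

-- Intrinsically typed terms of the lambda calculus with sums and products.
inductive Tm : Ctx → Ty → Type
  | var  {Γ A} : Var Γ A → Tm Γ A
  | lam  {Γ A B} : Tm (A :: Γ) B → Tm Γ (Ty.arr A B)
  | app  {Γ A B} : Tm Γ (Ty.arr A B) → Tm Γ A → Tm Γ B
  | pair {Γ A B} : Tm Γ A → Tm Γ B → Tm Γ (Ty.prod A B)
  | fst  {Γ A B} : Tm Γ (Ty.prod A B) → Tm Γ A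
  | snd  {Γ A B} : Tm Γ (Ty.prod A B) → Tm Γ B
  | inl  {Γ A B} : Tm Γ A → Tm Γ (Ty.sum A B)
  | inr  {Γ A B} : Tm Γ B → Tm Γ (Ty.sum A B)
  | case {Γ A B C} : Tm Γ (Ty.sum A B) → Tm (A :: Γ) C → Tm (B :: Γ) C → Tm Γ C

-- Renamings and substitutions.
def Ren (Γ Δ : Ctx) : Type := ∀ A, Var Γ A → Var Δ A

def Ren.lift {Γ Δ A} (ρ : Ren Γ Δ) : Ren (A :: Γ) (A :: Δ) := fun B x =>
  match x with
  | .vz => .vz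
  | .vs y => .vs (ρ B y)

def Tm.rename : ∀ {Γ Δ : Ctx} {A}, Ren Γ Δ → Tm Γ A → Tm Δ A
  | _, _, _, ρ, .var x => .var (ρ _ x)
  | _, _, _, ρ, .lam t => .lam (Tm.rename (Ren.lift ρ) t)
  | _, _, _, ρ, .app t u => .app (Tm.rename ρ t) (Tm.rename ρ u)
  | _, _, _, ρ, .pair t u => .pair (Tm.rename ρ t) (Tm.rename ρ u)
  | _, _, _, ρ, .fst t => .fst (Tm.rename ρ t)
  | _, _, _, ρ, .snd t => .snd (Tm.rename ρ t)
  | _, _, _, ρ, .inl t => .inl (Tm.rename ρ t)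
  | _, _, _, ρ, .inr t => .inr (Tm.rename ρ t)
  | _, _, _, ρ, .case s t u =>
      .case (Tm.rename ρ s) (Tm.rename (Ren.lift ρ) t) (Tm.rename (Ren.lift ρ) u)

/-- Weakening of a term by one extra hypothesis. -/
def Tm.wk {Γ A B} (t : Tm Γ A) : Tm (B :: Γ) A := Tm.rename (fun _ v => .vs v) t

def Sub (Γ Δ : Ctx) : Type := ∀ A, Var Γ A → Tm Δ A

def Sub.lift {Γ Δ A} (σ : Sub Γ Δ) : Sub (A :: Γ) (A :: Δ) := fun B x =>
  match x with
  | .vz => .var .vz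
  | .vs y => Tm.wk (σ B y)

def Tm.subst : ∀ {Γ Δ : Ctx} {A}, Sub Γ Δ → Tm Γ A → Tm Δ A
  | _, _, _, σ, .var x => σ _ x
  | _, _, _, σ, .lam t => .lam (Tm.subst (Sub.lift σ) t)
  | _, _, _, σ, .app t u => .app (Tm.subst σ t) (Tm.subst σ u)
  | _, _, _, σ, .pair t u => .pair (Tm.subst σ t) (Tm.subst σ u)
  | _, _, _, σ, .fst t => .fst (Tm.subst σ t)
  | _, _, _, σ, .snd t => .snd (Tm.subst σ t)
  | _, _, _, σ, .inl t => .inl (Tm.subst σ t)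
  | _, _, _, σ, .inr t => .inr (Tm.subst σ t)
  | _, _, _, σ, .case s t u =>
      .case (Tm.subst σ s) (Tm.subst (Sub.lift σ) t) (Tm.subst (Sub.lift σ) u)

/-- Substitution of a single term for de Bruijn index 0. -/
def Sub.single {Γ A} (u : Tm Γ A) : Sub (A :: Γ) Γ := fun B x =>
  match x with
  | .vz => u
  | .vs y => .var y

/-- `t.subst1 u` is `t{u/x}` where `x` is de Bruijn index 0. -/
def Tm.subst1 {Γ A B} (t : Tm (A :: Γ) B) (u : Tm Γ A) : Tm Γ B := Tm.subst (Sub.single u) t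

/-- The substitution `{ι₁ x₁ / x}` (for the top variable of sum type). -/
def Sub.inlTop {Γ A B} : Sub (Ty.sum A B :: Γ) (A :: Γ) := fun C x =>
  match x with
  | .vz => .inl (.var .vz)
  | .vs y => .var (.vs y)

/-- The substitution `{ι₂ x₂ / x}` (for the top variable of sum type). -/
def Sub.inrTop {Γ A B} : Sub (Ty.sum A B :: Γ) (B :: Γ) := fun C x =>
  match x with
  | .vz => .inr (.var .vz)
  | .vs y => .var (.vs y)

/-- Exchange of the two topmost hypotheses. -/
def Ren.swap {Γ A B} : Ren (A :: B :: Γ) (B :: A :: Γ) := fun C x =>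
  match x with
  | .vz => .vs .vz
  | .vs .vz => .vz
  | .vs (.vs y) => .vs (.vs y)

-- The standard equational theory =βη of the lambda calculus with sums.
inductive Jeq : ∀ {Γ : Ctx} {A : Ty}, Tm Γ A → Tm Γ A → Prop
  | refl {Γ A} (t : Tm Γ A) : Jeq t t
  | symm {Γ A} {t u : Tm Γ A} : Jeq t u → Jeq u t
  | trans {Γ A} {t u v : Tm Γ A} : Jeq t u → Jeq u v → Jeq t v
  | lam_congr {Γ A B} {t t' : Tm (A :: Γ) B} : Jeq t t' → Jeq (Tm.lam t) (Tm.lam t')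
  | app_congr {Γ A B} {t t' : Tm Γ (Ty.arr A B)} {u u' : Tm Γ A} :
      Jeq t t' → Jeq u u' → Jeq (Tm.app t u) (Tm.app t' u')
  | pair_congr {Γ A B} {t t' : Tm Γ A} {u u' : Tm Γ B} :
      Jeq t t' → Jeq u u' → Jeq (Tm.pair t u) (Tm.pair t' u')
  | fst_congr {Γ A B} {t t' : Tm Γ (Ty.prod A B)} : Jeq t t' → Jeq (Tm.fst t) (Tm.fst t')
  | snd_congr {Γ A B} {t t' : Tm Γ (Ty.prod A B)} : Jeq t t' → Jeq (Tm.snd t) (Tm.snd t')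
  | inl_congr {Γ A B} {t t' : Tm Γ A} : Jeq t t' → Jeq (Tm.inl (B := B) t) (Tm.inl t')
  | inr_congr {Γ A B} {t t' : Tm Γ B} : Jeq t t' → Jeq (Tm.inr (A := A) t) (Tm.inr t')
  | case_congr {Γ A B C} {s s' : Tm Γ (Ty.sum A B)} {t t' : Tm (A :: Γ) C} {u u' : Tm (B :: Γ) C} :
      Jeq s s' → Jeq t t' → Jeq u u' → Jeq (Tm.case s t u) (Tm.case s' t' u')
  | beta_arr {Γ A B} (t : Tm (A :: Γ) B) (u : Tm Γ A) :
      Jeq (Tm.app (Tm.lam t) u) (Tm.subst1 t u)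
  | beta_fst {Γ A B} (t : Tm Γ A) (u : Tm Γ B) : Jeq (Tm.fst (Tm.pair t u)) t
  | beta_snd {Γ A B} (t : Tm Γ A) (u : Tm Γ B) : Jeq (Tm.snd (Tm.pair t u)) u
  | beta_inl {Γ A B C} (m : Tm Γ A) (n₁ : Tm (A :: Γ) C) (n₂ : Tm (B :: Γ) C) :
      Jeq (Tm.case (Tm.inl m) n₁ n₂) (Tm.subst1 n₁ m)
  | beta_inr {Γ A B C} (m : Tm Γ B) (n₁ : Tm (A :: Γ) C) (n₂ : Tm (B :: Γ) C) :
      Jeq (Tm.case (Tm.inr m) n₁ n₂) (Tm.subst1 n₂ m)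
  | eta_arr {Γ A B} (t : Tm Γ (Ty.arr A B)) :
      Jeq t (Tm.lam (Tm.app (Tm.wk t) (Tm.var .vz)))
  | eta_prod {Γ A B} (t : Tm Γ (Ty.prod A B)) : Jeq t (Tm.pair (Tm.fst t) (Tm.snd t))
  | eta_sum {Γ A B C} (n : Tm (Ty.sum A B :: Γ) C) (m : Tm Γ (Ty.sum A B)) :
      Jeq (Tm.subst1 n m)
          (Tm.case m (Tm.subst Sub.inlTop n) (Tm.subst Sub.inrTop n))

/-- Type isomorphism: a pair of closed coercions whose compositions are βη-equal
to the identity. -/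
def Iso (τ σ : Ty) : Prop :=
  ∃ (M : Tm [] (Ty.arr σ τ)) (N : Tm [] (Ty.arr τ σ)),
    Jeq (Tm.lam (Tm.app (Tm.wk M) (Tm.app (Tm.wk N) (Tm.var .vz))))
        (Tm.lam (Tm.var .vz)) ∧
    Jeq (Tm.lam (Tm.app (Tm.wk N) (Tm.app (Tm.wk M) (Tm.var .vz))))
        (Tm.lam (Tm.var .vz))

-- The arithmetic interpretation of types under a valuation of the atoms.
def interpTy (v : ℕ → ℕ) : Ty → ℕ
  | .atom p => v p
  | .arr a b => interpTy v b ^ interpTy v a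
  | .prod a b => interpTy v a * interpTy v b
  | .sum a b => interpTy v a + interpTy v b

-- ===== Auxiliary semantic development =====

/-- Set-theoretic interpretation of types. -/
def sem (v : ℕ → ℕ) : Ty → Type
  | .atom p => Fin (v p)
  | .arr a b => sem v a → sem v b
  | .prod a b => sem v a × sem v b
  | .sum a b => sem v a ⊕ sem v b

/-- Semantic environments. -/
def Env (v : ℕ → ℕ) (Γ : Ctx) : Type := ∀ A, Var Γ A → sem v A

def Env.cons {v : ℕ → ℕ} {Γ A} (x : sem v A) (η : Env v Γ) : Env v (A :: Γ) :=
  fun B w =>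
    match w with
    | .vz => x
    | .vs y => η B y

/-- Evaluation of terms. -/
def eval (v : ℕ → ℕ) : ∀ {Γ A}, Tm Γ A → Env v Γ → sem v A
  | _, _, .var x, η => η _ x
  | _, _, .lam t, η => fun x => eval v t (Env.cons x η)
  | _, _, .app t u, η => eval v t η (eval v u η)
  | _, _, .pair t u, η => (eval v t η, eval v u η)
  | _, _, .fst t, η => (eval v t η).1
  | _, _, .snd t, η => (eval v t η).2
  | _, _, .inl t, η => Sum.inl (eval v t η)
  | _, _, .inr t, η => Sum.inr (eval v t η)
  | _, _, .case s t u, η =>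
      match eval v s η with
      | Sum.inl a => eval v t (Env.cons a η)
      | Sum.inr b => eval v u (Env.cons b η)

theorem eval_rename (v : ℕ → ℕ) :
    ∀ {Γ Δ A} (ρ : Ren Γ Δ) (t : Tm Γ A) (η : Env v Δ),
      eval v (t.rename ρ) η = eval v t (fun B x => η B (ρ B x))
  | _, _, _, ρ, .var x, η => rfl
  | _, _, _, ρ, .lam t, η => by
      show (fun x => eval v (t.rename (Ren.lift ρ)) (Env.cons x η)) = _
      funext x
      rw [eval_rename v (Ren.lift ρ) t (Env.cons x η)]
      congr 1
      funext B y
      cases y <;> rfl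
  | _, _, _, ρ, .app t u, η => by
      show eval v (t.rename ρ) η (eval v (u.rename ρ) η) = _
      rw [eval_rename v ρ t η, eval_rename v ρ u η]; rfl
  | _, _, _, ρ, .pair t u, η => by
      show (eval v (t.rename ρ) η, eval v (u.rename ρ) η) = _
      rw [eval_rename v ρ t η, eval_rename v ρ u η]; rfl
  | _, _, _, ρ, .fst t, η => by
      show (eval v (t.rename ρ) η).1 = _
      rw [eval_rename v ρ t η]; rfl
  | _, _, _, ρ, .snd t, η => by
      show (eval v (t.rename ρ) η).2 = _
      rw [eval_rename v ρ t η]; rfl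
  | _, _, _, ρ, .inl t, η => by
      show Sum.inl (eval v (t.rename ρ) η) = _
      rw [eval_rename v ρ t η]; rfl
  | _, _, _, ρ, .inr t, η => by
      show Sum.inr (eval v (t.rename ρ) η) = _
      rw [eval_rename v ρ t η]; rfl
  | _, _, _, ρ, .case s t u, η => by
      show (match eval v (s.rename ρ) η with
            | Sum.inl a => eval v (t.rename (Ren.lift ρ)) (Env.cons a η)
            | Sum.inr b => eval v (u.rename (Ren.lift ρ)) (Env.cons b η)) = _
      rw [eval_rename v ρ s η]
      show _ = (match eval v s (fun B x => η B (ρ B x)) with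
            | Sum.inl a => eval v t (Env.cons a (fun B x => η B (ρ B x)))
            | Sum.inr b => eval v u (Env.cons b (fun B x => η B (ρ B x))))
      cases eval v s (fun B x => η B (ρ B x)) with
      | inl a =>
          show eval v (t.rename (Ren.lift ρ)) (Env.cons a η) = _
          rw [eval_rename v (Ren.lift ρ) t (Env.cons a η)]
          congr 1; funext B y; cases y <;> rfl
      | inr b =>
          show eval v (u.rename (Ren.lift ρ)) (Env.cons b η) = _
          rw [eval_rename v (Ren.lift ρ) u (Env.cons b η)]
          congr 1; funext B y; cases y <;> rfl

theorem eval_wk (v : ℕ → ℕ) {Γ A B} (t : Tm Γ A) (x : sem v B) (η : Env v Γ) :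
    eval v (Tm.wk t) (Env.cons x η) = eval v t η := by
  rw [Tm.wk]; exact eval_rename v _ t _

theorem eval_subst (v : ℕ → ℕ) :
    ∀ {Γ Δ A} (σ : Sub Γ Δ) (t : Tm Γ A) (η : Env v Δ),
      eval v (t.subst σ) η = eval v t (fun B x => eval v (σ B x) η)
  | _, _, _, σ, .var x, η => rfl
  | _, _, _, σ, .lam t, η => by
      show (fun x => eval v (t.subst (Sub.lift σ)) (Env.cons x η)) = _
      funext x
      rw [eval_subst v (Sub.lift σ) t (Env.cons x η)]
      congr 1
      funext B y
      cases y with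
      | vz => rfl
      | vs y => exact eval_wk v (σ _ y) x η
  | _, _, _, σ, .app t u, η => by
      show eval v (t.subst σ) η (eval v (u.subst σ) η) = _
      rw [eval_subst v σ t η, eval_subst v σ u η]; rfl
  | _, _, _, σ, .pair t u, η => by
      show (eval v (t.subst σ) η, eval v (u.subst σ) η) = _
      rw [eval_subst v σ t η, eval_subst v σ u η]; rfl
  | _, _, _, σ, .fst t, η => by
      show (eval v (t.subst σ) η).1 = _
      rw [eval_subst v σ t η]; rfl
  | _, _, _, σ, .snd t, η => by
      show (eval v (t.subst σ) η).2 = _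
      rw [eval_subst v σ t η]; rfl
  | _, _, _, σ, .inl t, η => by
      show Sum.inl (eval v (t.subst σ) η) = _
      rw [eval_subst v σ t η]; rfl
  | _, _, _, σ, .inr t, η => by
      show Sum.inr (eval v (t.subst σ) η) = _
      rw [eval_subst v σ t η]; rfl
  | _, _, _, σ, .case s t u, η => by
      show (match eval v (s.subst σ) η with
            | Sum.inl a => eval v (t.subst (Sub.lift σ)) (Env.cons a η)
            | Sum.inr b => eval v (u.subst (Sub.lift σ)) (Env.cons b η)) = _
      rw [eval_subst v σ s η]
      show _ = (match eval v s (fun B x => eval v (σ B x) η) with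
            | Sum.inl a => eval v t (Env.cons a (fun B x => eval v (σ B x) η))
            | Sum.inr b => eval v u (Env.cons b (fun B x => eval v (σ B x) η)))
      cases eval v s (fun B x => eval v (σ B x) η) with
      | inl a =>
          show eval v (t.subst (Sub.lift σ)) (Env.cons a η) = _
          rw [eval_subst v (Sub.lift σ) t (Env.cons a η)]
          congr 1; funext B y
          cases y with
          | vz => rfl
          | vs y => exact eval_wk v (σ _ y) a η
      | inr b =>
          show eval v (u.subst (Sub.lift σ)) (Env.cons b η) = _
          rw [eval_subst v (Sub.lift σ) u (Env.cons b η)]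
          congr 1; funext B y
          cases y with
          | vz => rfl
          | vs y => exact eval_wk v (σ _ y) b η

theorem eval_subst1 (v : ℕ → ℕ) {Γ A B} (t : Tm (A :: Γ) B) (u : Tm Γ A) (η : Env v Γ) :
    eval v (t.subst1 u) η = eval v t (Env.cons (eval v u η) η) := by
  rw [Tm.subst1, eval_subst]
  congr 1
  funext B y
  cases y <;> rfl

/-- Soundness of the equational theory. -/
theorem jeq_sound (v : ℕ → ℕ) {Γ A} {t u : Tm Γ A} (h : Jeq t u) :
    ∀ η : Env v Γ, eval v t η = eval v u η := by
  induction h with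
  | refl t => intro η; rfl
  | symm _ ih => intro η; exact (ih η).symm
  | trans _ _ ih1 ih2 => intro η; exact (ih1 η).trans (ih2 η)
  | lam_congr _ ih => intro η; funext x; exact ih (Env.cons x η)
  | app_congr _ _ ih1 ih2 => intro η; simp only [eval]; rw [ih1 η, ih2 η]
  | pair_congr _ _ ih1 ih2 => intro η; simp only [eval]; rw [ih1 η, ih2 η]
  | fst_congr _ ih => intro η; simp only [eval]; rw [ih η]
  | snd_congr _ ih => intro η; simp only [eval]; rw [ih η]
  | inl_congr _ ih => intro η; simp only [eval]; rw [ih η]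
  | inr_congr _ ih => intro η; simp only [eval]; rw [ih η]
  | case_congr _ _ _ ih1 ih2 ih3 =>
      rename_i s s' t1 t1' u1 u1' _ _ _
      intro η
      simp only [eval]
      rw [ih1 η]
      cases eval v s' η with
      | inl a => exact ih2 (Env.cons a η)
      | inr b => exact ih3 (Env.cons b η)
  | beta_arr t u =>
      intro η
      show eval v t (Env.cons (eval v u η) η) = _
      rw [eval_subst1]
  | beta_fst t u => intro η; rfl
  | beta_snd t u => intro η; rfl
  | beta_inl m n₁ n₂ => intro η; exact (eval_subst1 v n₁ m η).symm
  | beta_inr m n₁ n₂ => intro η; exact (eval_subst1 v n₂ m η).symm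
  | eta_arr t =>
      intro η
      funext x
      show eval v t η x = eval v (Tm.wk t) (Env.cons x η) (eval v (Tm.var Var.vz) (Env.cons x η))
      rw [eval_wk]
      rfl
  | eta_prod t => intro η; rfl
  | eta_sum n m =>
      intro η
      rw [eval_subst1]
      show _ = (match eval v m η with
            | Sum.inl a => eval v (n.subst Sub.inlTop) (Env.cons a η)
            | Sum.inr b => eval v (n.subst Sub.inrTop) (Env.cons b η))
      cases hm : eval v m η with
      | inl a =>
          show eval v n (Env.cons (Sum.inl a) η) = eval v (n.subst Sub.inlTop) (Env.cons a η)
          rw [eval_subst]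
          congr 1; funext B y; cases y <;> rfl
      | inr b =>
          show eval v n (Env.cons (Sum.inr b) η) = eval v (n.subst Sub.inrTop) (Env.cons b η)
          rw [eval_subst]
          congr 1; funext B y; cases y <;> rfl

/-- Each semantic type is equivalent to a `Fin` of its arithmetic size. -/
def semEquiv (v : ℕ → ℕ) : ∀ A : Ty, sem v A ≃ Fin (interpTy v A)
  | .atom p => Equiv.refl _
  | .arr a b =>
      (Equiv.arrowCongr (semEquiv v a) (semEquiv v b)).trans finFunctionFinEquiv
  | .prod a b =>
      (Equiv.prodCongr (semEquiv v a) (semEquiv v b)).trans finProdFinEquiv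
  | .sum a b =>
      (Equiv.sumCongr (semEquiv v a) (semEquiv v b)).trans finSumFinEquiv

/-- Isomorphic types are arithmetically equal: if τ ≅ σ then for
every valuation of the atomic types by positive natural numbers, the arithmetic
interpretations of τ and σ coincide. -/
theorem iso_implies_arith_eq (τ σ : Ty) (h : Iso τ σ)
    (v : ℕ → ℕ) (hv : ∀ p : ℕ, 0 < v p) :
    interpTy v τ = interpTy v σ := by
  obtain ⟨M, N, h1, h2⟩ := h
  let η₀ : Env v [] := fun A x => nomatch x
  have hMN : ∀ x : sem v τ, eval v M η₀ (eval v N η₀ x) = x := by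
    intro x
    have := congrFun (jeq_sound v h1 η₀) x
    simp [eval, eval_wk] at this; exact this
  have hNM : ∀ y : sem v σ, eval v N η₀ (eval v M η₀ y) = y := by
    intro y
    have := congrFun (jeq_sound v h2 η₀) y
    simp [eval, eval_wk] at this; exact this
  have e : sem v τ ≃ sem v σ := ⟨eval v N η₀, eval v M η₀, hMN, hNM⟩
  have e' : Fin (interpTy v τ) ≃ Fin (interpTy v σ) :=
    ((semEquiv v τ).symm.trans e).trans (semEquiv v σ)
  simpa using Fintype.card_congr e'

end ExpLog
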